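/- The category of 2-degenerate 3-computads is not equivalent to a presheaf category. -/

import Mathlib

open CategoryTheory

/-- A 2-degenerate 3-computad: a single 0-cell, no 1-cells, so the data is a set of
2-cells, a set of 3-cells, and boundary maps into the free commutative monoid
(multisets) on the 2-cells. -/
structure DegComputad where
  C2 : Type
  C3 : Type
  src : C3 → Multiset C2
  tgt : C3 → Multiset C2

/-- Morphisms of 2-degenerate 3-computads. -/
@[ext]
structure DegComputad.Hom (A B : DegComputad) where
  f2 : A.C2 → B.C2
  f3 : A.C3 → B.C3
  src_comm : ∀ e, B.src (f3 e) = Multiset.map f2 (A.src e)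
  tgt_comm : ∀ e, B.tgt (f3 e) = Multiset.map f2 (A.tgt e)

instance : Category DegComputad where
  Hom := DegComputad.Hom
  id A := ⟨id, id, by simp, by simp⟩
  comp f g := ⟨g.f2 ∘ f.f2, g.f3 ∘ f.f3,
    by intro e; simp [f.src_comm, g.src_comm, Multiset.map_map],
    by intro e; simp [f.tgt_comm, g.tgt_comm, Multiset.map_map]⟩

@[simp] lemma DegComputad.id_f2 (A : DegComputad) : (𝟙 A : A ⟶ A).f2 = id := rfl
@[simp] lemma DegComputad.id_f3 (A : DegComputad) : (𝟙 A : A ⟶ A).f3 = id := rfl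
@[simp] lemma DegComputad.comp_f2 {A B C : DegComputad} (f : A ⟶ B) (g : B ⟶ C) :
    (f ≫ g).f2 = g.f2 ∘ f.f2 := rfl
@[simp] lemma DegComputad.comp_f3 {A B C : DegComputad} (f : A ⟶ B) (g : B ⟶ C) :
    (f ≫ g).f3 = g.f3 ∘ f.f3 := rfl

namespace Stmt10Aux

open CategoryTheory.Limits

/-! ### Classification lemmas for small multisets -/

lemma card_of_map_pair {α β : Type} (M : Multiset (α × β)) {x y : α}
    (h : M.map Prod.fst = {x, y}) : M.card = 2 := by
  have := congrArg Multiset.card h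
  simpa using this

lemma classify1 {α β : Type} (M : Multiset (α × β)) {a : α} {b : β}
    (h1 : M.map Prod.fst = {a}) (h2 : M.map Prod.snd = {b}) : M = {(a, b)} := by
  have hc : M.card = 1 := by simpa using congrArg Multiset.card h1
  obtain ⟨z, rfl⟩ := Multiset.card_eq_one.mp hc
  simp only [Multiset.map_singleton, Multiset.singleton_inj] at h1 h2
  rw [show z = (a, b) from Prod.ext h1 h2]

lemma classifyAA (M : Multiset (Fin 3 × Fin 3))
    (h1 : M.map Prod.fst = {0, 1}) (h2 : M.map Prod.snd = {0, 1}) :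
    M = {(0, 0), (1, 1)} ∨ M = {(0, 1), (1, 0)} := by
  obtain ⟨x, y, rfl⟩ := Multiset.card_eq_two.mp (card_of_map_pair M h1)
  simp only [Multiset.insert_eq_cons, Multiset.map_cons, Multiset.map_singleton] at h1 h2
  revert h1 h2; revert x y; decide

lemma classifyAQ (M : Multiset (Fin 3 × Fin 2))
    (h1 : M.map Prod.fst = {0, 1}) (h2 : M.map Prod.snd = {0, 0}) :
    M = {(0, 0), (1, 0)} := by
  obtain ⟨x, y, rfl⟩ := Multiset.card_eq_two.mp (card_of_map_pair M h1)
  simp only [Multiset.insert_eq_cons, Multiset.map_cons, Multiset.map_singleton] at h1 h2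
  revert h1 h2; revert x y; decide

/-! ### The explicit computads -/

abbrev Pch : DegComputad := ⟨Unit, Empty, fun e => e.elim, fun e => e.elim⟩
abbrev Ach : DegComputad := ⟨Fin 3, Unit, fun _ => {0, 1}, fun _ => {2}⟩
abbrev Qch : DegComputad := ⟨Fin 2, Unit, fun _ => {0, 0}, fun _ => {1}⟩
abbrev APch : DegComputad := ⟨Fin 3 × Unit, Empty, fun e => e.elim, fun e => e.elim⟩
abbrev AAch : DegComputad :=
  ⟨Fin 3 × Fin 3, Bool,
    fun b => if b then {(0, 0), (1, 1)} else {(0, 1), (1, 0)}, fun _ => {(2, 2)}⟩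
abbrev AQch : DegComputad := ⟨Fin 3 × Fin 2, Unit, fun _ => {(0, 0), (1, 0)}, fun _ => {(2, 1)}⟩
abbrev Zch : DegComputad := ⟨Fin 3 × Fin 2, Bool, fun _ => {(0, 0), (1, 0)}, fun _ => {(2, 1)}⟩

abbrev q2 : Fin 3 → Fin 2 := fun i => if i = 2 then 1 else 0

/-! ### The explicit morphisms -/

def mu : Pch ⟶ Ach := ⟨fun _ => 0, fun e => e.elim, fun e => e.elim, fun e => e.elim⟩
def mv : Pch ⟶ Ach := ⟨fun _ => 1, fun e => e.elim, fun e => e.elim, fun e => e.elim⟩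
def mq : Ach ⟶ Qch := ⟨q2, fun _ => (), by decide, by decide⟩

def mub : APch ⟶ AAch := ⟨fun x => (x.1, 0), fun e => e.elim, fun e => e.elim, fun e => e.elim⟩
def mvb : APch ⟶ AAch := ⟨fun x => (x.1, 1), fun e => e.elim, fun e => e.elim, fun e => e.elim⟩
def mqb : AAch ⟶ AQch := ⟨Prod.map id q2, fun _ => (), by decide, by decide⟩
def mw : AAch ⟶ Zch := ⟨Prod.map id q2, id, by decide, by decide⟩

def pAP_A : APch ⟶ Ach := ⟨Prod.fst, fun e => e.elim, fun e => e.elim, fun e => e.elim⟩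
def pAP_P : APch ⟶ Pch := ⟨Prod.snd, fun e => e.elim, fun e => e.elim, fun e => e.elim⟩
def pAA_1 : AAch ⟶ Ach := ⟨Prod.fst, fun _ => (), by decide, by decide⟩
def pAA_2 : AAch ⟶ Ach := ⟨Prod.snd, fun _ => (), by decide, by decide⟩
def pAQ_A : AQch ⟶ Ach := ⟨Prod.fst, fun _ => (), by decide, by decide⟩
def pAQ_Q : AQch ⟶ Qch := ⟨Prod.snd, fun _ => (), by decide, by decide⟩


/-! ### Boundary lemmas for morphisms into the explicit computads -/

variable {T : DegComputad}

lemma srcA (f : T ⟶ Ach) (x : T.C3) :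
    Multiset.map f.f2 (T.src x) = ({0, 1} : Multiset (Fin 3)) := (f.src_comm x).symm

lemma tgtA (f : T ⟶ Ach) (x : T.C3) :
    Multiset.map f.f2 (T.tgt x) = ({2} : Multiset (Fin 3)) := (f.tgt_comm x).symm

lemma srcQ (f : T ⟶ Qch) (x : T.C3) :
    Multiset.map f.f2 (T.src x) = ({0, 0} : Multiset (Fin 2)) := (f.src_comm x).symm

lemma tgtQ (f : T ⟶ Qch) (x : T.C3) :
    Multiset.map f.f2 (T.tgt x) = ({1} : Multiset (Fin 2)) := (f.tgt_comm x).symm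


/-- `s.π` with its type normalized. -/
abbrev cpi (s : Cofork mu mv) : Ach ⟶ s.pt := s.π

/-- `s.fst` with its type normalized. -/
abbrev bfst {X Y : DegComputad} (s : BinaryFan X Y) : s.pt ⟶ X := s.fst

/-- `s.snd` with its type normalized. -/
abbrev bsnd {X Y : DegComputad} (s : BinaryFan X Y) : s.pt ⟶ Y := s.snd

/-! ### `mq` is the coequalizer of `mu` and `mv` -/

lemma huv : mu ≫ mq = mv ≫ mq := by
  apply DegComputad.Hom.ext
  · funext x; show q2 0 = q2 1; decide
  · funext e; exact e.elim

lemma pi2_eq (s : Cofork mu mv) :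
    (cpi s).f2 0 = (cpi s).f2 1 :=
  congrFun (congrArg DegComputad.Hom.f2 s.condition) (() : Pch.C2)

/-- The descent morphism for the coequalizer. -/
def coeqDesc (s : Cofork mu mv) : Qch ⟶ s.pt where
  f2 := fun j => (cpi s).f2 (if j = 0 then 0 else 2)
  f3 := fun _ => (cpi s).f3 ()
  src_comm := by
    intro e
    have h := (cpi s).src_comm ()
    rw [show s.pt.src ((cpi s).f3 ()) =
      Multiset.map (cpi s).f2 ({0, 1} : Multiset (Fin 3)) from h]
    show _ = Multiset.map _ ({0, 0} : Multiset (Fin 2))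
    simp only [Multiset.insert_eq_cons, Multiset.map_cons, Multiset.map_singleton, reduceIte]
    rw [pi2_eq s]
  tgt_comm := by
    intro e
    have h := (cpi s).tgt_comm ()
    rw [show s.pt.tgt ((cpi s).f3 ()) =
      Multiset.map (cpi s).f2 ({2} : Multiset (Fin 3)) from h]
    show _ = Multiset.map _ ({1} : Multiset (Fin 2))
    simp only [Multiset.map_singleton]
    rfl

def coeqIsColim : IsColimit (Cofork.ofπ mq huv) := by
  refine Cofork.IsColimit.mk _ (fun s => coeqDesc s) (fun s => ?_) (fun s m hm => ?_)
  · apply DegComputad.Hom.ext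
    · show (coeqDesc s).f2 ∘ q2 = (cpi s).f2
      funext i
      show (cpi s).f2 (if q2 i = 0 then 0 else 2) = (cpi s).f2 i
      fin_cases i
      · rfl
      · exact pi2_eq s
      · rfl
    · funext x
      show (cpi s).f3 () = (cpi s).f3 x
      rfl
  · apply DegComputad.Hom.ext
    · have h2 := congrArg DegComputad.Hom.f2 hm
      funext j
      revert j
      show ∀ j : Fin 2, m.f2 j = (cpi s).f2 (if j = 0 then 0 else 2)
      intro j
      fin_cases j
      · exact congrFun h2 (0 : Fin 3)
      · exact congrFun h2 (2 : Fin 3)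
    · funext x
      have h3 := congrArg DegComputad.Hom.f3 hm
      exact congrFun h3 ((() : Unit) : Ach.C3)

/-! ### The explicit binary products -/

/-- `APch` is the product of `Ach` and `Pch`. -/
def limAP : IsLimit (BinaryFan.mk pAP_A pAP_P) := by
  refine BinaryFan.isLimitMk
    (fun s => ⟨fun y => ((bfst s).f2 y, (bsnd s).f2 y),
      fun x => ((bsnd s).f3 x).elim,
      fun x => ((bsnd s).f3 x).elim,
      fun x => ((bsnd s).f3 x).elim⟩)
    (fun s => ?_) (fun s => ?_) (fun s m h1 h2 => ?_)
  · apply DegComputad.Hom.ext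
    · rfl
    · funext x; exact ((bsnd s).f3 x).elim
  · apply DegComputad.Hom.ext
    · rfl
    · funext x; exact ((bsnd s).f3 x).elim
  · apply DegComputad.Hom.ext
    · funext y
      exact Prod.ext (congrFun (congrArg DegComputad.Hom.f2 h1) y)
        (congrFun (congrArg DegComputad.Hom.f2 h2) y)
    · funext x; exact (m.f3 x).elim

section AA

variable (s : BinaryFan Ach Ach)

/-- The candidate 2-cell map for the lift into `AAch`. -/
abbrev aaF2 : s.pt.C2 → Fin 3 × Fin 3 :=
  fun y => ((bfst s).f2 y, (bsnd s).f2 y)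

lemma aa_fst (x : s.pt.C3) :
    (Multiset.map (aaF2 s) (s.pt.src x)).map Prod.fst = {0, 1} := by
  rw [Multiset.map_map]; exact srcA (bfst s) x

lemma aa_snd (x : s.pt.C3) :
    (Multiset.map (aaF2 s) (s.pt.src x)).map Prod.snd = {0, 1} := by
  rw [Multiset.map_map]; exact srcA (bsnd s) x

lemma aa_tfst (x : s.pt.C3) :
    (Multiset.map (aaF2 s) (s.pt.tgt x)).map Prod.fst = {2} := by
  rw [Multiset.map_map]; exact tgtA (bfst s) x

lemma aa_tsnd (x : s.pt.C3) :
    (Multiset.map (aaF2 s) (s.pt.tgt x)).map Prod.snd = {2} := by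
  rw [Multiset.map_map]; exact tgtA (bsnd s) x

/-- The lift into the product `AAch`. -/
def aaLift : s.pt ⟶ AAch where
  f2 := aaF2 s
  f3 := fun x => if Multiset.map (aaF2 s) (s.pt.src x) = {(0, 0), (1, 1)} then true else false
  src_comm := by
    intro x
    show AAch.src (if Multiset.map (aaF2 s) (s.pt.src x) = {(0, 0), (1, 1)}
      then true else false) = Multiset.map (aaF2 s) (s.pt.src x)
    rcases classifyAA _ (aa_fst s x) (aa_snd s x) with h | h <;> rw [h] <;> decide
  tgt_comm := by
    intro x
    rw [classify1 _ (aa_tfst s x) (aa_tsnd s x)]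

lemma srcAA_inj : ∀ b b' : Bool, AAch.src b = AAch.src b' → b = b' := by decide

/-- `AAch` is the product of `Ach` and `Ach`. -/
def limAA : IsLimit (BinaryFan.mk pAA_1 pAA_2) := by
  refine BinaryFan.isLimitMk (fun s => aaLift s)
    (fun s => ?_) (fun s => ?_) (fun s m h1 h2 => ?_)
  · apply DegComputad.Hom.ext
    · rfl
    · funext x; exact Subsingleton.elim _ _
  · apply DegComputad.Hom.ext
    · rfl
    · funext x; exact Subsingleton.elim _ _
  · have hf2 : m.f2 = aaF2 s := by
      funext y
      exact Prod.ext (congrFun (congrArg DegComputad.Hom.f2 h1) y)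
        (congrFun (congrArg DegComputad.Hom.f2 h2) y)
    apply DegComputad.Hom.ext
    · exact hf2
    · funext x
      apply srcAA_inj
      rw [m.src_comm x, (aaLift s).src_comm x, hf2]
      rfl

end AA

section AQ

variable (s : BinaryFan Ach Qch)

/-- The lift into the product `AQch`. -/
def aqLift : s.pt ⟶ AQch where
  f2 := fun y => ((bfst s).f2 y, (bsnd s).f2 y)
  f3 := fun _ => ()
  src_comm := by
    intro x
    have h1 : (Multiset.map
        (fun y => ((bfst s).f2 y, (bsnd s).f2 y))
        (s.pt.src x)).map Prod.fst = {0, 1} := by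
      rw [Multiset.map_map]; exact srcA (bfst s) x
    have h2 : (Multiset.map
        (fun y => ((bfst s).f2 y, (bsnd s).f2 y))
        (s.pt.src x)).map Prod.snd = {0, 0} := by
      rw [Multiset.map_map]; exact srcQ (bsnd s) x
    rw [classifyAQ _ h1 h2]
  tgt_comm := by
    intro x
    have h1 : (Multiset.map
        (fun y => ((bfst s).f2 y, (bsnd s).f2 y))
        (s.pt.tgt x)).map Prod.fst = {2} := by
      rw [Multiset.map_map]; exact tgtA (bfst s) x
    have h2 : (Multiset.map
        (fun y => ((bfst s).f2 y, (bsnd s).f2 y))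
        (s.pt.tgt x)).map Prod.snd = {1} := by
      rw [Multiset.map_map]; exact tgtQ (bsnd s) x
    rw [classify1 _ h1 h2]

/-- `AQch` is the product of `Ach` and `Qch`. -/
def limAQ : IsLimit (BinaryFan.mk pAQ_A pAQ_Q) := by
  refine BinaryFan.isLimitMk (fun s => aqLift s)
    (fun s => ?_) (fun s => ?_) (fun s m h1 h2 => ?_)
  · apply DegComputad.Hom.ext
    · rfl
    · funext x; exact Subsingleton.elim _ _
  · apply DegComputad.Hom.ext
    · rfl
    · funext x; exact Subsingleton.elim _ _
  · apply DegComputad.Hom.ext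
    · funext y
      exact Prod.ext (congrFun (congrArg DegComputad.Hom.f2 h1) y)
        (congrFun (congrArg DegComputad.Hom.f2 h2) y)
    · funext x; exact Subsingleton.elim _ _

end AQ

/-! ### Relations between the explicit morphisms -/

lemma mub_p1 : mub ≫ pAA_1 = pAP_A := by
  apply DegComputad.Hom.ext
  · rfl
  · funext e; exact e.elim

lemma mub_p2 : mub ≫ pAA_2 = pAP_P ≫ mu := by
  apply DegComputad.Hom.ext
  · rfl
  · funext e; exact e.elim

lemma mvb_p1 : mvb ≫ pAA_1 = pAP_A := by
  apply DegComputad.Hom.ext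
  · rfl
  · funext e; exact e.elim

lemma mvb_p2 : mvb ≫ pAA_2 = pAP_P ≫ mv := by
  apply DegComputad.Hom.ext
  · rfl
  · funext e; exact e.elim

lemma mqb_pA : mqb ≫ pAQ_A = pAA_1 := by
  apply DegComputad.Hom.ext
  · rfl
  · funext x; exact Subsingleton.elim _ _

lemma mqb_pQ : mqb ≫ pAQ_Q = pAA_2 ≫ mq := by
  apply DegComputad.Hom.ext
  · rfl
  · funext x; exact Subsingleton.elim _ _

lemma mubw_eq_mvbw : mub ≫ mw = mvb ≫ mw := by
  apply DegComputad.Hom.ext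
  · funext x
    show ((x.1 : Fin 3), q2 0) = (x.1, q2 1)
    rw [show q2 0 = q2 1 from by decide]
  · funext e; exact e.elim


/-! ### The abstract part: transport along an equivalence with a presheaf category -/

section Abstract

open MonoidalCategory CartesianMonoidalCategory

variable {C : Type} [SmallCategory C] (e : DegComputad ≌ (Cᵒᵖ ⥤ Type))

/-- The composite functor `X ↦ e⁻¹(e(A) ⊗ e(X))`, an avatar of `A × (−)`. -/
noncomputable abbrev Fct : DegComputad ⥤ DegComputad :=
  e.functor ⋙ tensorLeft (e.functor.obj Ach) ⋙ e.inverse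

/-- First projection `Fct(Y) ⟶ Ach`. -/
noncomputable def prB (Y : DegComputad) : (Fct e).obj Y ⟶ Ach :=
  e.inverse.map (fst (e.functor.obj Ach) (e.functor.obj Y)) ≫ e.unitInv.app Ach

/-- Second projection `Fct(Y) ⟶ Y`. -/
noncomputable def prX (Y : DegComputad) : (Fct e).obj Y ⟶ Y :=
  e.inverse.map (snd (e.functor.obj Ach) (e.functor.obj Y)) ≫ e.unitInv.app Y

/-- `Fct(Y)` is a product of `Ach` and `Y`. -/
noncomputable def FfanIsLim (Y : DegComputad) :
    IsLimit (BinaryFan.mk (prB e Y) (prX e Y)) := by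
  refine BinaryFan.isLimitMk
    (fun s => e.unit.app s.pt ≫
      e.inverse.map (lift (e.functor.map (bfst s)) (e.functor.map (bsnd s))))
    (fun s => ?_) (fun s => ?_) (fun s m h1 h2 => ?_)
  · show _ ≫ prB e Y = bfst s
    rw [prB, Category.assoc, ← Functor.map_comp_assoc, lift_fst,
      Equivalence.inv_fun_map]
    simp
  · show _ ≫ prX e Y = bsnd s
    rw [prX, Category.assoc, ← Functor.map_comp_assoc, lift_snd,
      Equivalence.inv_fun_map]
    simp
  · replace h1 : m ≫ prB e Y = bfst s := h1
    replace h2 : m ≫ prX e Y = bsnd s := h2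
    have key : e.functor.map m ≫ e.counit.app (e.functor.obj Ach ⊗ e.functor.obj Y)
        = lift (e.functor.map (bfst s)) (e.functor.map (bsnd s)) := by
      apply CartesianMonoidalCategory.hom_ext
      · have nat := e.counit.naturality (fst (e.functor.obj Ach) (e.functor.obj Y))
        simp only [Functor.id_map, Functor.comp_map] at nat
        rw [Category.assoc, lift_fst, ← nat, ← Category.assoc, ← e.functor.map_comp]
        have h1' : m ≫ e.inverse.map (fst (e.functor.obj Ach) (e.functor.obj Y))
            = bfst s ≫ e.unit.app Ach := by
          rw [← h1, prB]
          simp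
        rw [h1', e.functor.map_comp, Category.assoc, Equivalence.functor_unit_comp,
          Category.comp_id]
      · have nat := e.counit.naturality (snd (e.functor.obj Ach) (e.functor.obj Y))
        simp only [Functor.id_map, Functor.comp_map] at nat
        rw [Category.assoc, lift_snd, ← nat, ← Category.assoc, ← e.functor.map_comp]
        have h2' : m ≫ e.inverse.map (snd (e.functor.obj Ach) (e.functor.obj Y))
            = bsnd s ≫ e.unit.app Y := by
          rw [← h2, prX]
          simp
        rw [h2', e.functor.map_comp, Category.assoc, Equivalence.functor_unit_comp,
          Category.comp_id]
    apply e.functor.map_injective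
    rw [e.functor.map_comp, Equivalence.fun_inv_map, ← Category.assoc,
      Equivalence.functor_unit_comp, Category.id_comp, ← key, Category.assoc]
    rw [show e.counit.app (e.functor.obj Ach ⊗ e.functor.obj Y) ≫
        e.counitInv.app ((tensorLeft (e.functor.obj Ach)).obj (e.functor.obj Y)) = 𝟙 _ from
      e.counitIso.hom_inv_id_app _]
    exact (Category.comp_id _).symm

lemma Fmap_prB {Y Z : DegComputad} (f : Y ⟶ Z) :
    (Fct e).map f ≫ prB e Z = prB e Y := by
  show e.inverse.map (e.functor.obj Ach ◁ e.functor.map f) ≫ _ = _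
  rw [prB, prB, ← Functor.map_comp_assoc, whiskerLeft_fst]

lemma Fmap_prX {Y Z : DegComputad} (f : Y ⟶ Z) :
    (Fct e).map f ≫ prX e Z = prX e Y ≫ f := by
  show e.inverse.map (e.functor.obj Ach ◁ e.functor.map f) ≫ _ = _
  rw [prX, prX, ← Functor.map_comp_assoc, whiskerLeft_snd, Functor.map_comp,
    Category.assoc, Equivalence.inv_fun_map]
  simp


/-! ### Comparison isomorphisms with the explicit products -/

/-- Comparison `Fct(Pch) ≅ APch`. -/
noncomputable def alP : (Fct e).obj Pch ≅ APch :=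
  (FfanIsLim e Pch).conePointUniqueUpToIso limAP

/-- Comparison `Fct(Ach) ≅ AAch`. -/
noncomputable def alA : (Fct e).obj Ach ≅ AAch :=
  (FfanIsLim e Ach).conePointUniqueUpToIso limAA

/-- Comparison `Fct(Qch) ≅ AQch`. -/
noncomputable def alQ : (Fct e).obj Qch ≅ AQch :=
  (FfanIsLim e Qch).conePointUniqueUpToIso limAQ

lemma alP_p1 : (alP e).hom ≫ pAP_A = prB e Pch := by
  exact IsLimit.conePointUniqueUpToIso_hom_comp (FfanIsLim e Pch) limAP
    ⟨WalkingPair.left⟩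

lemma alP_p2 : (alP e).hom ≫ pAP_P = prX e Pch := by
  exact IsLimit.conePointUniqueUpToIso_hom_comp (FfanIsLim e Pch) limAP
    ⟨WalkingPair.right⟩

lemma alA_p1 : (alA e).hom ≫ pAA_1 = prB e Ach := by
  exact IsLimit.conePointUniqueUpToIso_hom_comp (FfanIsLim e Ach) limAA
    ⟨WalkingPair.left⟩

lemma alA_p2 : (alA e).hom ≫ pAA_2 = prX e Ach := by
  exact IsLimit.conePointUniqueUpToIso_hom_comp (FfanIsLim e Ach) limAA
    ⟨WalkingPair.right⟩

lemma alQ_p1 : (alQ e).hom ≫ pAQ_A = prB e Qch := by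
  exact IsLimit.conePointUniqueUpToIso_hom_comp (FfanIsLim e Qch) limAQ
    ⟨WalkingPair.left⟩

lemma alQ_p2 : (alQ e).hom ≫ pAQ_Q = prX e Qch := by
  exact IsLimit.conePointUniqueUpToIso_hom_comp (FfanIsLim e Qch) limAQ
    ⟨WalkingPair.right⟩

/-! ### The three commuting squares -/

lemma sqU : (alP e).hom ≫ mub = (Fct e).map mu ≫ (alA e).hom := by
  apply BinaryFan.IsLimit.hom_ext limAA
  · show ((alP e).hom ≫ mub) ≫ pAA_1 = ((Fct e).map mu ≫ (alA e).hom) ≫ pAA_1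
    rw [Category.assoc, Category.assoc, mub_p1, alP_p1, alA_p1,
      Fmap_prB]
  · show ((alP e).hom ≫ mub) ≫ pAA_2 = ((Fct e).map mu ≫ (alA e).hom) ≫ pAA_2
    rw [Category.assoc, Category.assoc, mub_p2, alA_p2, Fmap_prX e mu,
      ← Category.assoc, alP_p2]

lemma sqV : (alP e).hom ≫ mvb = (Fct e).map mv ≫ (alA e).hom := by
  apply BinaryFan.IsLimit.hom_ext limAA
  · show ((alP e).hom ≫ mvb) ≫ pAA_1 = ((Fct e).map mv ≫ (alA e).hom) ≫ pAA_1
    rw [Category.assoc, Category.assoc, mvb_p1, alP_p1, alA_p1,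
      Fmap_prB]
  · show ((alP e).hom ≫ mvb) ≫ pAA_2 = ((Fct e).map mv ≫ (alA e).hom) ≫ pAA_2
    rw [Category.assoc, Category.assoc, mvb_p2, alA_p2, Fmap_prX e mv,
      ← Category.assoc, alP_p2]

lemma sqQ : (alA e).hom ≫ mqb = (Fct e).map mq ≫ (alQ e).hom := by
  apply BinaryFan.IsLimit.hom_ext limAQ
  · show ((alA e).hom ≫ mqb) ≫ pAQ_A = ((Fct e).map mq ≫ (alQ e).hom) ≫ pAQ_A
    rw [Category.assoc, Category.assoc, mqb_pA, alA_p1, alQ_p1,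
      Fmap_prB]
  · show ((alA e).hom ≫ mqb) ≫ pAQ_Q = ((Fct e).map mq ≫ (alQ e).hom) ≫ pAQ_Q
    rw [Category.assoc, Category.assoc, mqb_pQ, alQ_p2, Fmap_prX e mq,
      ← Category.assoc, alA_p2]

/-! ### The contradiction -/

include e in
theorem no_equiv : False := by
  haveI h1 : PreservesColimits e.functor := e.toAdjunction.leftAdjoint_preservesColimits
  haveI h2 : PreservesColimits e.inverse := e.symm.toAdjunction.leftAdjoint_preservesColimits
  haveI h4 : PreservesColimits (Fct e) := by unfold Fct; infer_instance
  have hq2 := isColimitCoforkMapOfIsColimit (Fct e) huv coeqIsColim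
  have hcc : (Fct e).map mu ≫ ((alA e).hom ≫ mw)
      = (Fct e).map mv ≫ ((alA e).hom ≫ mw) := by
    rw [← Category.assoc, ← sqU, ← Category.assoc, ← sqV, Category.assoc, Category.assoc,
      mubw_eq_mvbw]
  have hk' : (Fct e).map mq ≫ hq2.desc (Cofork.ofπ ((alA e).hom ≫ mw) hcc)
      = (alA e).hom ≫ mw := by
    simpa using Cofork.IsColimit.π_desc (t := Cofork.ofπ ((alA e).hom ≫ mw) hcc) hq2
  have hmain : mqb ≫ ((alQ e).inv ≫ hq2.desc (Cofork.ofπ ((alA e).hom ≫ mw) hcc))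
      = mw := by
    have hmqb : mqb = (alA e).inv ≫ ((Fct e).map mq ≫ (alQ e).hom) := by
      rw [Iso.eq_inv_comp]; exact sqQ e
    rw [hmqb]
    simp only [Category.assoc, Iso.hom_inv_id_assoc]
    rw [hk']
    simp
  have h3 := congrArg DegComputad.Hom.f3 hmain
  have t1 : mw.f3 true = mw.f3 false := by
    calc mw.f3 true
        = (mqb ≫ ((alQ e).inv ≫ hq2.desc (Cofork.ofπ ((alA e).hom ≫ mw) hcc))).f3 true :=
          (congrFun h3 true).symm
      _ = (mqb ≫ ((alQ e).inv ≫ hq2.desc (Cofork.ofπ ((alA e).hom ≫ mw) hcc))).f3 false :=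
          rfl
      _ = mw.f3 false := congrFun h3 false
  exact absurd t1 (by decide)

end Abstract

end Stmt10Aux

/-- The category of 2-degenerate 3-computads is not equivalent to any presheaf
category `Set^{Cᵒᵖ}` on a small category `C`. -/
theorem stmt10 :
    ¬ ∃ (C : Type) (_ : SmallCategory C), Nonempty (DegComputad ≌ (Cᵒᵖ ⥤ Type)) := by
  rintro ⟨C, instC, ⟨e⟩⟩
  letI := instC
  exact Stmt10Aux.no_equiv e
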